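/- Let Γ be a finite group. Call an irreducible finite-dimensional complex representation ρ of Γ a Heisenberg representation if ρ(g) = id for every g in the iterated commutator subgroup ⁅Γ, ⁅Γ, Γ⁆⁆. Then: (a) for every Heisenberg representation ρ there is a unique homomorphism ν_ρ : ⁅Γ, Γ⁆ → ℂˣ with ρ(x) = ν_ρ(x)·id for all x ∈ ⁅Γ, Γ⁆, and ν_ρ is invariant under conjugation by Γ; (b) letting C_ρ ⊆ Γ denote the preimage in Γ of the center of Γ/ker(ν_ρ), there is a unique homomorphism ν̃_ρ : C_ρ → ℂˣ with ρ(x) = ν̃_ρ(x)·id for all x ∈ C_ρ, and ν̃_ρ extends ν_ρ; (c) the assignment ρ ↦ (ν_ρ, ν̃_ρ) induces a bijection from the set of isomorphism classes of Heisenberg representations of Γ onto the set S(Γ) of all pairs (ν, ν̃) in which ν : ⁅Γ, Γ⁆ → ℂˣ is a homomorphism invariant under conjugation by Γ and ν̃ is a homomorphism extending ν from ⁅Γ, Γ⁆ to the preimage in Γ of the center of Γ/ker(ν). -/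

import Mathlib

/-- A bundled irreducible finite-dimensional complex representation of a group `G`. -/
structure IrrRep (G : Type) [Group G] where
  carrier : Type
  [isAddCommGroup : AddCommGroup carrier]
  [isModule : Module ℂ carrier]
  [isFiniteDimensional : FiniteDimensional ℂ carrier]
  ρ : G →* (carrier →ₗ[ℂ] carrier)
  nontrivial : ∃ v : carrier, v ≠ 0
  irreducible : ∀ W : Submodule ℂ carrier,
    (∀ g : G, ∀ v ∈ W, ρ g v ∈ W) → W = ⊥ ∨ W = ⊤

attribute [instance] IrrRep.isAddCommGroup IrrRep.isModule IrrRep.isFiniteDimensional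

variable (G : Type) [Group G]

/-- A Heisenberg representation: an irreducible representation that is trivial on
`⁅Γ, ⁅Γ, Γ⁆⁆`. -/
def IsHeisenbergRep (ρ : IrrRep G) : Prop :=
  ∀ g ∈ ⁅(⊤ : Subgroup G), commutator G⁆, ρ.ρ g = 1

/-- Invariance of a character of the commutator subgroup under conjugation by `G`. -/
def NuInvariant (ν : ↥(commutator G) →* ℂˣ) : Prop :=
  ∀ (γ : G) (x y : ↥(commutator G)), (y : G) = γ * (x : G) * γ⁻¹ → ν y = ν x

/-- The kernel of a character of the commutator subgroup, as a subset of `G`. -/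
def nuKer (ν : ↥(commutator G) →* ℂˣ) : Set G :=
  {g : G | ∃ h : g ∈ commutator G, ν ⟨g, h⟩ = 1}

/-- The preimage in `G` of the center of `G / ker ν`: the set of `g ∈ G` all of whose
commutators with elements of `G` lie in `ker ν`. -/
def centerPreimage (ν : ↥(commutator G) →* ℂˣ) : Set G :=
  {g : G | ∀ x : G, g * x * g⁻¹ * x⁻¹ ∈ nuKer G ν}

/-- `ν̃` is a homomorphism on the preimage of the center extending `ν`. -/
def IsCentralExtensionOf (ν : ↥(commutator G) →* ℂˣ) (ν' : G → ℂˣ) : Prop :=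
  (∀ x ∈ centerPreimage G ν, ∀ y ∈ centerPreimage G ν, ν' (x * y) = ν' x * ν' y) ∧
    ∀ x : ↥(commutator G), ν' (x : G) = ν x

/-- The representation `ρ` induces the pair `(ν, ν̃)`: it acts by the scalar `ν` on the
commutator subgroup and by the scalar `ν̃` on the preimage of the center. -/
def Induces (ρ : IrrRep G) (ν : ↥(commutator G) →* ℂˣ) (ν' : G → ℂˣ) : Prop :=
  (∀ x : ↥(commutator G), ρ.ρ (x : G) = ((ν x : ℂˣ) : ℂ) • LinearMap.id) ∧
    ∀ g ∈ centerPreimage G ν, ρ.ρ g = ((ν' g : ℂˣ) : ℂ) • LinearMap.id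

/-- Isomorphism of bundled representations. -/
def RepIso (ρ₁ ρ₂ : IrrRep G) : Prop :=
  ∃ e : ρ₁.carrier ≃ₗ[ℂ] ρ₂.carrier, ∀ (g : G) (v : ρ₁.carrier),
    e (ρ₁.ρ g v) = ρ₂.ρ g (e v)
open scoped commutatorElement

namespace HeisAux

variable {G}

theorem comm_inv {M : Type*} [Monoid M] {a b g : M} (h1 : a * b = 1) (h2 : b * a = 1)
    (h : g * a = a * g) : g * b = b * g := by
  calc g * b = (b * a) * (g * b) := by rw [h2, one_mul]
    _ = b * ((a * g) * b) := by simp only [mul_assoc]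
    _ = b * ((g * a) * b) := by rw [h]
    _ = (b * g) * (a * b) := by simp only [mul_assoc]
    _ = b * g := by rw [h1, mul_one]

theorem scalar_unique (ρ : IrrRep G) {c d : ℂ}
    (h : (c • LinearMap.id : ρ.carrier →ₗ[ℂ] ρ.carrier) = d • LinearMap.id) : c = d := by
  obtain ⟨v, hv⟩ := ρ.nontrivial
  have h2 := LinearMap.congr_fun h v
  simp only [LinearMap.smul_apply, LinearMap.id_apply] at h2
  exact smul_left_injective ℂ hv h2

theorem schur_scalar (ρ : IrrRep G) (T : ρ.carrier →ₗ[ℂ] ρ.carrier)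
    (hT : ∀ g : G, ρ.ρ g ∘ₗ T = T ∘ₗ ρ.ρ g) : ∃ c : ℂ, T = c • LinearMap.id := by
  obtain ⟨v, hv⟩ := ρ.nontrivial
  have : Nontrivial ρ.carrier := ⟨v, 0, hv⟩
  obtain ⟨c, hc⟩ := Module.End.exists_eigenvalue (T : Module.End ℂ ρ.carrier)
  refine ⟨c, ?_⟩
  obtain ⟨w, hw⟩ := hc.exists_hasEigenvector
  have hww : T w = c • w := hw.apply_eq_smul
  have hw0 : w ≠ 0 := hw.right
  set W : Submodule ℂ ρ.carrier := LinearMap.ker (T - c • LinearMap.id) with hWdef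
  have hwW : w ∈ W := by
    simp [hWdef, LinearMap.mem_ker, LinearMap.sub_apply, hww, sub_self]
  have hinv : ∀ g : G, ∀ u ∈ W, ρ.ρ g u ∈ W := by
    intro g u hu
    simp only [hWdef, LinearMap.mem_ker, LinearMap.sub_apply, LinearMap.smul_apply,
      LinearMap.id_apply] at hu ⊢
    have h3 := LinearMap.congr_fun (hT g) u
    simp only [LinearMap.comp_apply] at h3
    rw [← h3, ← map_smul, ← map_sub]
    rw [sub_eq_zero] at hu
    rw [hu, sub_self, map_zero]
  rcases ρ.irreducible W hinv with hbot | htop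
  · exact absurd (hbot ▸ hwW) (by simp [hw0])
  · have h4 : T - c • LinearMap.id = 0 := LinearMap.ker_eq_top.mp htop
    linear_combination (norm := module) h4

theorem commutes_unit_scalar (ρ : IrrRep G) (x : G)
    (hx : ∀ g : G, ρ.ρ g * ρ.ρ x = ρ.ρ x * ρ.ρ g) :
    ∃ c : ℂˣ, ρ.ρ x = (c : ℂ) • LinearMap.id := by
  have hxx : ρ.ρ x * ρ.ρ x⁻¹ = 1 := by rw [← map_mul, mul_inv_cancel, map_one]
  have hxx' : ρ.ρ x⁻¹ * ρ.ρ x = 1 := by rw [← map_mul, inv_mul_cancel, map_one]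
  obtain ⟨c, hc⟩ := schur_scalar ρ (ρ.ρ x) (fun g => hx g)
  obtain ⟨d, hd⟩ := schur_scalar ρ (ρ.ρ x⁻¹) (fun g => comm_inv hxx hxx' (hx g))
  have e1 : ((c • LinearMap.id : ρ.carrier →ₗ[ℂ] ρ.carrier) * (d • LinearMap.id))
      = (c * d) • LinearMap.id := by
    ext u
    simp [Module.End.mul_apply, mul_smul]
    rw [smul_comm]
  have h2 : ((c * d) • LinearMap.id : ρ.carrier →ₗ[ℂ] ρ.carrier) = (1 : ℂ) • LinearMap.id := by
    rw [← e1, ← hc, ← hd, hxx, one_smul]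
    rfl
  exact ⟨Units.mkOfMulEqOne c d (scalar_unique ρ h2), hc⟩

theorem scalar_eq (ρ : IrrRep G) {g : G} {c d : ℂˣ}
    (h1 : ρ.ρ g = (c : ℂ) • LinearMap.id) (h2 : ρ.ρ g = (d : ℂ) • LinearMap.id) : c = d :=
  Units.ext (scalar_unique ρ (h1 ▸ h2))

end HeisAux
namespace HeisAux

variable {G}

/-- For a Heisenberg representation, elements of the commutator subgroup act by
unit scalars. -/
theorem heis_comm_scalar (ρ : IrrRep G) (hH : IsHeisenbergRep G ρ)
    {x : G} (hx : x ∈ commutator G) :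
    ∃ c : ℂˣ, ρ.ρ x = (c : ℂ) • LinearMap.id := by
  apply commutes_unit_scalar
  intro g
  have hk : ⁅g, x⁆ ∈ ⁅(⊤ : Subgroup G), commutator G⁆ :=
    Subgroup.commutator_mem_commutator (Subgroup.mem_top g) hx
  have h1 : ρ.ρ ⁅g, x⁆ = 1 := hH _ hk
  have h2 : g * x = ⁅g, x⁆ * (x * g) := by
    rw [commutatorElement_def]; group
  calc ρ.ρ g * ρ.ρ x = ρ.ρ (g * x) := (map_mul ρ.ρ g x).symm
    _ = ρ.ρ ⁅g, x⁆ * ρ.ρ (x * g) := by rw [h2, map_mul]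
    _ = ρ.ρ x * ρ.ρ g := by rw [h1, one_mul, map_mul]

/-- The scalar character `ν` of a Heisenberg representation. -/
noncomputable def nuOf (ρ : IrrRep G) (hH : IsHeisenbergRep G ρ) :
    ↥(commutator G) →* ℂˣ where
  toFun x := (heis_comm_scalar ρ hH x.2).choose
  map_one' := by
    apply scalar_eq ρ (g := ((1 : ↥(commutator G)) : G))
      (heis_comm_scalar ρ hH (1 : ↥(commutator G)).2).choose_spec
    simp only [OneMemClass.coe_one, map_one, Units.val_one, one_smul]
    rfl
  map_mul' x y := by
    apply scalar_eq ρ (g := ((x * y : ↥(commutator G)) : G))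
      (heis_comm_scalar ρ hH (x * y).2).choose_spec
    have hx := (heis_comm_scalar ρ hH x.2).choose_spec
    have hy := (heis_comm_scalar ρ hH y.2).choose_spec
    have hco : ((x * y : ↥(commutator G)) : G) = (x : G) * (y : G) := rfl
    rw [hco, map_mul, Units.val_mul]
    conv_lhs => rw [hx, hy]
    ext u
    simp only [Module.End.mul_apply, LinearMap.smul_apply, LinearMap.id_apply, mul_smul]

theorem nuOf_spec (ρ : IrrRep G) (hH : IsHeisenbergRep G ρ) (x : ↥(commutator G)) :
    ρ.ρ (x : G) = ((nuOf ρ hH x : ℂˣ) : ℂ) • LinearMap.id :=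
  (heis_comm_scalar ρ hH x.2).choose_spec

/-- Any scalar character of the commutator subgroup coming from an irreducible
representation is conjugation-invariant. -/
theorem scalar_invariant (ρ : IrrRep G) (ν : ↥(commutator G) →* ℂˣ)
    (hν : ∀ x : ↥(commutator G), ρ.ρ (x : G) = ((ν x : ℂˣ) : ℂ) • LinearMap.id) :
    NuInvariant G ν := by
  intro γ x y hy
  apply scalar_eq ρ (g := (y : G)) (hν y)
  rw [hy, map_mul, map_mul, hν x]
  have hinv : ρ.ρ γ * ρ.ρ γ⁻¹ = 1 := by rw [← map_mul, mul_inv_cancel, map_one]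
  calc ρ.ρ γ * (((ν x : ℂˣ) : ℂ) • LinearMap.id) * ρ.ρ γ⁻¹
      = ((ν x : ℂˣ) : ℂ) • (ρ.ρ γ * LinearMap.id * ρ.ρ γ⁻¹) := by
        rw [mul_smul_comm, smul_mul_assoc]
    _ = ((ν x : ℂˣ) : ℂ) • (ρ.ρ γ * ρ.ρ γ⁻¹) := by
        rw [show (LinearMap.id : ρ.carrier →ₗ[ℂ] ρ.carrier) = 1 from rfl, mul_one]
    _ = ((ν x : ℂˣ) : ℂ) • LinearMap.id := by rw [hinv]; rfl

end HeisAux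
namespace HeisAux

variable {G}

section KerCenter

variable {ν : ↥(commutator G) →* ℂˣ}

theorem nu_mul {a b : G} (ha : a ∈ commutator G) (hb : b ∈ commutator G)
    (hab : a * b ∈ commutator G) : ν ⟨a * b, hab⟩ = ν ⟨a, ha⟩ * ν ⟨b, hb⟩ := by
  have h : (⟨a * b, hab⟩ : ↥(commutator G)) = ⟨a, ha⟩ * ⟨b, hb⟩ := rfl
  rw [h, map_mul]

theorem nu_inv {a : G} (ha : a ∈ commutator G) (hai : a⁻¹ ∈ commutator G) :
    ν ⟨a⁻¹, hai⟩ = (ν ⟨a, ha⟩)⁻¹ := by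
  have h : (⟨a⁻¹, hai⟩ : ↥(commutator G)) = (⟨a, ha⟩ : ↥(commutator G))⁻¹ := rfl
  rw [h, map_inv]

theorem nu_conj (hInv : NuInvariant G ν) (γ : G) {a : G} (ha : a ∈ commutator G)
    (hc : γ * a * γ⁻¹ ∈ commutator G) : ν ⟨γ * a * γ⁻¹, hc⟩ = ν ⟨a, ha⟩ :=
  hInv γ ⟨a, ha⟩ ⟨γ * a * γ⁻¹, hc⟩ rfl

theorem nuKer_commutator {a : G} (ha : a ∈ nuKer G ν) : a ∈ commutator G := ha.1

theorem nuKer_val {a : G} (ha : a ∈ nuKer G ν) (h : a ∈ commutator G) : ν ⟨a, h⟩ = 1 := ha.2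

theorem nuKer_one : (1 : G) ∈ nuKer G ν :=
  ⟨one_mem _, by rw [show (⟨1, one_mem _⟩ : ↥(commutator G)) = 1 from rfl, map_one]⟩

theorem nuKer_mul {a b : G} (ha : a ∈ nuKer G ν) (hb : b ∈ nuKer G ν) : a * b ∈ nuKer G ν := by
  obtain ⟨ha1, ha2⟩ := ha
  obtain ⟨hb1, hb2⟩ := hb
  exact ⟨mul_mem ha1 hb1, by rw [nu_mul ha1 hb1, ha2, hb2, one_mul]⟩

theorem nuKer_inv {a : G} (ha : a ∈ nuKer G ν) : a⁻¹ ∈ nuKer G ν := by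
  obtain ⟨ha1, ha2⟩ := ha
  exact ⟨inv_mem ha1, by rw [nu_inv ha1, ha2, inv_one]⟩

theorem nuKer_conj (hInv : NuInvariant G ν) (γ : G) {a : G} (ha : a ∈ nuKer G ν) :
    γ * a * γ⁻¹ ∈ nuKer G ν := by
  obtain ⟨ha1, ha2⟩ := ha
  have hc : γ * a * γ⁻¹ ∈ commutator G := (Subgroup.commutator_normal ⊤ ⊤).conj_mem a ha1 γ
  exact ⟨hc, by rw [nu_conj hInv γ ha1, ha2]⟩

theorem comm_mem_center (hInv : NuInvariant G ν) {x : G} (hx : x ∈ commutator G) :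
    x ∈ centerPreimage G ν := by
  intro w
  have hm : w * x⁻¹ * w⁻¹ ∈ commutator G :=
    (Subgroup.commutator_normal ⊤ ⊤).conj_mem x⁻¹ (inv_mem hx) w
  have hmem : x * w * x⁻¹ * w⁻¹ ∈ commutator G := by
    have h1 : x * w * x⁻¹ * w⁻¹ = x * (w * x⁻¹ * w⁻¹) := by group
    rw [h1]; exact mul_mem hx hm
  refine ⟨hmem, ?_⟩
  have h1 : x * w * x⁻¹ * w⁻¹ = x * (w * x⁻¹ * w⁻¹) := by group
  have h2 : ν ⟨x * w * x⁻¹ * w⁻¹, hmem⟩ = ν ⟨x, hx⟩ * ν ⟨w * x⁻¹ * w⁻¹, hm⟩ := by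
    have : (⟨x * w * x⁻¹ * w⁻¹, hmem⟩ : ↥(commutator G)) = ⟨x, hx⟩ * ⟨w * x⁻¹ * w⁻¹, hm⟩ :=
      Subtype.ext h1
    rw [this, map_mul]
  rw [h2, nu_conj hInv w (inv_mem hx), nu_inv hx, mul_inv_cancel]

theorem center_comm_mem (hInv : NuInvariant G ν) {g : G} (hg : g ∈ centerPreimage G ν)
    (γ : G) : γ * g * γ⁻¹ * g⁻¹ ∈ nuKer G ν := by
  have h1 := hg γ⁻¹
  have h2 := nuKer_conj hInv γ h1
  have h3 : γ * (g * γ⁻¹ * g⁻¹ * γ⁻¹⁻¹) * γ⁻¹ = γ * g * γ⁻¹ * g⁻¹ := by group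
  rwa [h3] at h2

theorem center_one (hInv : NuInvariant G ν) : (1 : G) ∈ centerPreimage G ν :=
  comm_mem_center hInv (one_mem _)

theorem center_mul (hInv : NuInvariant G ν) {a b : G} (ha : a ∈ centerPreimage G ν)
    (hb : b ∈ centerPreimage G ν) : a * b ∈ centerPreimage G ν := by
  intro x
  have h1 : a * b * x * (a * b)⁻¹ * x⁻¹ = (a * (b * x * b⁻¹ * x⁻¹) * a⁻¹) * (a * x * a⁻¹ * x⁻¹) := by
    group
  rw [h1]
  exact nuKer_mul (nuKer_conj hInv a (hb x)) (ha x)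

theorem center_inv (hInv : NuInvariant G ν) {a : G} (ha : a ∈ centerPreimage G ν) :
    a⁻¹ ∈ centerPreimage G ν := by
  intro x
  have h1 : a⁻¹ * x * a⁻¹⁻¹ * x⁻¹ = a⁻¹ * (a * x * a⁻¹ * x⁻¹)⁻¹ * a⁻¹⁻¹ := by group
  rw [h1]
  exact nuKer_conj hInv a⁻¹ (nuKer_inv (ha x))

theorem center_conj (hInv : NuInvariant G ν) (γ : G) {g : G} (hg : g ∈ centerPreimage G ν) :
    γ * g * γ⁻¹ ∈ centerPreimage G ν := by
  intro x
  have h1 : γ * g * γ⁻¹ * x * (γ * g * γ⁻¹)⁻¹ * x⁻¹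
      = γ * (g * (γ⁻¹ * x * γ) * g⁻¹ * (γ⁻¹ * x * γ)⁻¹) * γ⁻¹ := by group
  rw [h1]
  exact nuKer_conj hInv γ (hg (γ⁻¹ * x * γ))

theorem not_center (hInv : NuInvariant G ν) {g : G} (hg : g ∉ centerPreimage G ν) :
    ∃ x : G, ∀ h : g * x * g⁻¹ * x⁻¹ ∈ commutator G, ν ⟨g * x * g⁻¹ * x⁻¹, h⟩ ≠ 1 := by
  rw [centerPreimage, Set.mem_setOf_eq] at hg
  push_neg at hg
  obtain ⟨x, hx⟩ := hg
  exact ⟨x, fun h h1 => hx ⟨h, h1⟩⟩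

end KerCenter

end HeisAux
namespace HeisAux

variable {G}

theorem smul_id_mul {M : Type*} [AddCommGroup M] [Module ℂ M] (c d : ℂ) :
    ((c • LinearMap.id : M →ₗ[ℂ] M) * (d • LinearMap.id)) = (c * d) • LinearMap.id := by
  ext u
  simp only [Module.End.mul_apply, LinearMap.smul_apply, LinearMap.id_apply, mul_smul]

theorem center_scalar (ρ : IrrRep G) (ν : ↥(commutator G) →* ℂˣ)
    (hν : ∀ x : ↥(commutator G), ρ.ρ (x : G) = ((ν x : ℂˣ) : ℂ) • LinearMap.id)
    (hInv : NuInvariant G ν) {g : G} (hg : g ∈ centerPreimage G ν) :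
    ∃ c : ℂˣ, ρ.ρ g = (c : ℂ) • LinearMap.id := by
  apply commutes_unit_scalar
  intro x
  have hk : x * g * x⁻¹ * g⁻¹ ∈ nuKer G ν := center_comm_mem hInv hg x
  have h1 : ρ.ρ (x * g * x⁻¹ * g⁻¹) = 1 := by
    rw [hν ⟨x * g * x⁻¹ * g⁻¹, nuKer_commutator hk⟩]
    rw [nuKer_val hk]
    simp only [Units.val_one, one_smul]
    rfl
  have h2 : x * g = (x * g * x⁻¹ * g⁻¹) * (g * x) := by group
  calc ρ.ρ x * ρ.ρ g = ρ.ρ (x * g) := (map_mul ρ.ρ x g).symm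
    _ = ρ.ρ (x * g * x⁻¹ * g⁻¹) * ρ.ρ (g * x) := by rw [← map_mul, ← h2]
    _ = ρ.ρ g * ρ.ρ x := by rw [h1, one_mul, map_mul]

open Classical in
/-- The extended scalar character on the preimage of the center. -/
noncomputable def nuTilde (ρ : IrrRep G) (ν : ↥(commutator G) →* ℂˣ)
    (hν : ∀ x : ↥(commutator G), ρ.ρ (x : G) = ((ν x : ℂˣ) : ℂ) • LinearMap.id) :
    G → ℂˣ := fun g =>
  if h : g ∈ centerPreimage G ν then
    (center_scalar ρ ν hν (scalar_invariant ρ ν hν) h).choose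
  else 1

theorem nuTilde_spec (ρ : IrrRep G) (ν : ↥(commutator G) →* ℂˣ)
    (hν : ∀ x : ↥(commutator G), ρ.ρ (x : G) = ((ν x : ℂˣ) : ℂ) • LinearMap.id)
    {g : G} (hg : g ∈ centerPreimage G ν) :
    ρ.ρ g = ((nuTilde ρ ν hν g : ℂˣ) : ℂ) • LinearMap.id := by
  rw [nuTilde]
  rw [dif_pos hg]
  exact (center_scalar ρ ν hν (scalar_invariant ρ ν hν) hg).choose_spec

theorem nuTilde_central (ρ : IrrRep G) (ν : ↥(commutator G) →* ℂˣ)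
    (hν : ∀ x : ↥(commutator G), ρ.ρ (x : G) = ((ν x : ℂˣ) : ℂ) • LinearMap.id) :
    IsCentralExtensionOf G ν (nuTilde ρ ν hν) := by
  have hInv := scalar_invariant ρ ν hν
  constructor
  · intro x hx y hy
    have hxy : x * y ∈ centerPreimage G ν := center_mul hInv hx hy
    apply scalar_eq ρ (nuTilde_spec ρ ν hν hxy)
    rw [map_mul, nuTilde_spec ρ ν hν hx, nuTilde_spec ρ ν hν hy, smul_id_mul, Units.val_mul]
  · intro x
    apply scalar_eq ρ (nuTilde_spec ρ ν hν (comm_mem_center hInv x.2))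
    exact hν x

end HeisAux
namespace HeisAux

/-- Right translation representation of `G` on `G → ℂ`. -/
noncomputable def transRep : G →* ((G → ℂ) →ₗ[ℂ] (G → ℂ)) where
  toFun g :=
    { toFun := fun f => fun x => f (x * g)
      map_add' := fun f h => by funext x; simp
      map_smul' := fun c f => by funext x; simp }
  map_one' := by ext f x; simp
  map_mul' g h := by
    ext f x
    simp [Module.End.mul_apply, mul_assoc]

variable {G}

/-- The induced space: functions on `G` that transform by `ν'` under left translation
by the preimage of the center. -/
noncomputable def indV (ν : ↥(commutator G) →* ℂˣ) (ν' : G → ℂˣ) : Submodule ℂ (G → ℂ) where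
  carrier := {f | ∀ c ∈ centerPreimage G ν, ∀ x, f (c * x) = ((ν' c : ℂˣ) : ℂ) * f x}
  add_mem' := fun hf hg c hc x => by
    simp only [Pi.add_apply, hf c hc x, hg c hc x, mul_add]
  zero_mem' := fun c hc x => by simp
  smul_mem' := fun a f hf c hc x => by
    simp only [Pi.smul_apply, smul_eq_mul, hf c hc x]
    ring

theorem indV_invariant (ν : ↥(commutator G) →* ℂˣ) (ν' : G → ℂˣ) (g : G)
    (f : G → ℂ) (hf : f ∈ indV ν ν') : transRep G g f ∈ indV ν ν' := by
  intro c hc x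
  show f (c * x * g) = _ * f (x * g)
  rw [mul_assoc]
  exact hf c hc (x * g)

section NuPrime

variable {ν : ↥(commutator G) →* ℂˣ} {ν' : G → ℂˣ}

theorem nuPrime_one (hCE : IsCentralExtensionOf G ν ν') : ν' 1 = 1 := by
  have h := hCE.2 1
  rwa [OneMemClass.coe_one, map_one] at h

theorem nuPrime_ker (hCE : IsCentralExtensionOf G ν ν') {k : G} (hk : k ∈ nuKer G ν) :
    ν' k = 1 := by
  have h := hCE.2 ⟨k, hk.1⟩
  rw [hk.2] at h
  exact h

theorem nuPrime_conj (hInv : NuInvariant G ν) (hCE : IsCentralExtensionOf G ν ν')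
    (γ : G) {g : G} (hg : g ∈ centerPreimage G ν) : ν' (γ * g * γ⁻¹) = ν' g := by
  have hk : γ * g * γ⁻¹ * g⁻¹ ∈ nuKer G ν := center_comm_mem hInv hg γ
  have h1 : γ * g * γ⁻¹ = (γ * g * γ⁻¹ * g⁻¹) * g := by group
  rw [h1, hCE.1 _ (comm_mem_center hInv hk.1) _ hg, nuPrime_ker hCE hk, one_mul]

theorem indV_scalar_comm (hInv : NuInvariant G ν) (hCE : IsCentralExtensionOf G ν ν')
    {x : G} (hx : x ∈ commutator G) (f : G → ℂ) (hf : f ∈ indV ν ν') :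
    transRep G x f = ((ν ⟨x, hx⟩ : ℂˣ) : ℂ) • f := by
  funext y
  show f (y * x) = _
  have hcm : y * x * y⁻¹ ∈ commutator G := (Subgroup.commutator_normal ⊤ ⊤).conj_mem x hx y
  have h1 : y * x = (y * x * y⁻¹) * y := by group
  rw [h1, hf _ (comm_mem_center hInv hcm) y]
  rw [hCE.2 ⟨y * x * y⁻¹, hcm⟩, nu_conj hInv y hx]
  rfl

theorem indV_scalar_center (hInv : NuInvariant G ν) (hCE : IsCentralExtensionOf G ν ν')
    {g : G} (hg : g ∈ centerPreimage G ν) (f : G → ℂ) (hf : f ∈ indV ν ν') :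
    transRep G g f = ((ν' g : ℂˣ) : ℂ) • f := by
  funext y
  show f (y * g) = _
  have h1 : y * g = (y * g * y⁻¹) * y := by group
  rw [h1, hf _ (center_conj hInv y hg) y, nuPrime_conj hInv hCE y hg]
  rfl

open Classical in
theorem indV_ne_bot (hInv : NuInvariant G ν) (hCE : IsCentralExtensionOf G ν ν') :
    indV ν ν' ≠ ⊥ := by
  set f₀ : G → ℂ := fun x => if x ∈ centerPreimage G ν then ((ν' x : ℂˣ) : ℂ) else 0 with hf₀
  have hmem : f₀ ∈ indV ν ν' := by
    intro c hc x
    by_cases hx : x ∈ centerPreimage G ν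
    · have hcx : c * x ∈ centerPreimage G ν := center_mul hInv hc hx
      simp only [hf₀, if_pos hx, if_pos hcx]
      rw [hCE.1 c hc x hx]
      push_cast
      ring
    · have hcx : c * x ∉ centerPreimage G ν := by
        intro hmem2
        exact hx (by
          have := center_mul hInv (center_inv hInv hc) hmem2
          rwa [inv_mul_cancel_left] at this)
      simp only [hf₀, if_neg hx, if_neg hcx, mul_zero]
  have hne : f₀ ≠ 0 := by
    intro h0
    have h1 := congrFun h0 1
    simp only [hf₀, if_pos (center_one hInv), Pi.zero_apply] at h1
    rw [nuPrime_one hCE] at h1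
    simp at h1
  intro hbot
  rw [hbot] at hmem
  exact hne (by simpa using hmem)

theorem nuKer_commutator_top (hInv : NuInvariant G ν) {g : G}
    (hg : g ∈ ⁅(⊤ : Subgroup G), commutator G⁆) : g ∈ nuKer G ν := by
  let K : Subgroup G :=
    { carrier := nuKer G ν
      one_mem' := nuKer_one
      mul_mem' := fun ha hb => nuKer_mul ha hb
      inv_mem' := fun ha => nuKer_inv ha }
  have hle : ⁅(⊤ : Subgroup G), commutator G⁆ ≤ K := by
    rw [Subgroup.commutator_le]
    intro γ _ x hx
    show ⁅γ, x⁆ ∈ nuKer G ν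
    rw [commutatorElement_def]
    exact center_comm_mem hInv (comm_mem_center hInv hx) γ
  exact hle hg

end NuPrime

end HeisAux
namespace HeisAux

variable {G}

theorem exists_heis [Finite G] (ν : ↥(commutator G) →* ℂˣ) (ν' : G → ℂˣ)
    (hInv : NuInvariant G ν) (hCE : IsCentralExtensionOf G ν ν') :
    ∃ ρ : IrrRep G, IsHeisenbergRep G ρ ∧ Induces G ρ ν ν' := by
  classical
  cases nonempty_fintype G
  set V := indV ν ν' with hV
  have hex : ∃ n : ℕ, ∃ W : Submodule ℂ (G → ℂ),
      (W ≤ V ∧ (∀ g : G, ∀ f ∈ W, transRep G g f ∈ W) ∧ W ≠ ⊥) ∧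
        Module.finrank ℂ ↥W = n :=
    ⟨_, V, ⟨le_rfl, fun g f hf => indV_invariant ν ν' g f hf, indV_ne_bot hInv hCE⟩, rfl⟩
  obtain ⟨W, hPW, hWrank⟩ := Nat.find_spec hex
  obtain ⟨hWV, hWinv, hWne⟩ := hPW
  have hscal_comm : ∀ (x : G) (hx : x ∈ commutator G), ∀ f ∈ W,
      transRep G x f = ((ν ⟨x, hx⟩ : ℂˣ) : ℂ) • f :=
    fun x hx f hf => indV_scalar_comm hInv hCE hx f (hWV hf)
  have hscal_cen : ∀ (g : G), g ∈ centerPreimage G ν → ∀ f ∈ W,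
      transRep G g f = ((ν' g : ℂˣ) : ℂ) • f :=
    fun g hg f hf => indV_scalar_center hInv hCE hg f (hWV hf)
  let ρhom : G →* (↥W →ₗ[ℂ] ↥W) :=
    { toFun := fun g => (transRep G g).restrict (fun f hf => hWinv g f hf)
      map_one' := by
        apply LinearMap.ext; intro u
        apply Subtype.ext
        show transRep G 1 (u : G → ℂ) = (u : G → ℂ)
        rw [map_one]; rfl
      map_mul' := fun g h => by
        apply LinearMap.ext; intro u
        apply Subtype.ext
        show transRep G (g * h) (u : G → ℂ) = transRep G g (transRep G h (u : G → ℂ))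
        rw [map_mul]; rfl }
  have hnot : ∃ v : ↥W, v ≠ 0 := by
    obtain ⟨f, hfW, hf0⟩ := (Submodule.ne_bot_iff W).mp hWne
    exact ⟨⟨f, hfW⟩, fun h => hf0 (congrArg Subtype.val h)⟩
  have hirr : ∀ U : Submodule ℂ ↥W, (∀ g : G, ∀ v ∈ U, ρhom g v ∈ U) → U = ⊥ ∨ U = ⊤ := by
    intro U hU
    by_cases hUbot : U = ⊥
    · exact Or.inl hUbot
    right
    set U' := U.map W.subtype with hU'def
    have hU'V : U' ≤ V := le_trans (Submodule.map_subtype_le W U) hWV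
    have hU'inv : ∀ g : G, ∀ f ∈ U', transRep G g f ∈ U' := by
      rintro g f ⟨u, hu, rfl⟩
      exact ⟨ρhom g u, hU g u hu, rfl⟩
    have hU'ne : U' ≠ ⊥ := by
      intro h
      apply hUbot
      apply Submodule.map_injective_of_injective W.injective_subtype
      rw [Submodule.map_bot]
      exact h
    have hrankle : Nat.find hex ≤ Module.finrank ℂ ↥U' :=
      Nat.find_min' hex ⟨U', ⟨hU'V, hU'inv, hU'ne⟩, rfl⟩
    have hU'W : U' = W :=
      Submodule.eq_of_le_of_finrank_le (Submodule.map_subtype_le W U)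
        (by rw [hWrank]; exact hrankle)
    apply Submodule.map_injective_of_injective W.injective_subtype
    rw [Submodule.map_subtype_top]
    exact hU'W
  refine ⟨{ carrier := ↥W, ρ := ρhom, nontrivial := hnot, irreducible := hirr }, ?_, ?_, ?_⟩
  · intro g hg
    have hgk := nuKer_commutator_top hInv hg
    apply LinearMap.ext; intro u
    apply Subtype.ext
    show transRep G g (u : G → ℂ) = (u : G → ℂ)
    rw [hscal_comm g hgk.1 (u : G → ℂ) u.2, nuKer_val hgk hgk.1]
    simp
  · intro x
    apply LinearMap.ext; intro u
    apply Subtype.ext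
    show transRep G (x : G) (u : G → ℂ) = ((ν x : ℂˣ) : ℂ) • (u : G → ℂ)
    rw [hscal_comm (x : G) x.2 (u : G → ℂ) u.2]
  · intro g hg
    apply LinearMap.ext; intro u
    apply Subtype.ext
    show transRep G g (u : G → ℂ) = ((ν' g : ℂˣ) : ℂ) • (u : G → ℂ)
    rw [hscal_cen g hg (u : G → ℂ) u.2]

end HeisAux
namespace HeisAux

variable {G}

theorem matrix_scalar_of_induces (ρ : IrrRep G) {ν : ↥(commutator G) →* ℂˣ} {ν' : G → ℂˣ}
    (h : Induces G ρ ν ν') {n : Type} [Fintype n] [DecidableEq n] (b : Module.Basis n ℂ ρ.carrier)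
    {g : G} (hg : g ∈ centerPreimage G ν) :
    LinearMap.toMatrix b b (ρ.ρ g) = ((ν' g : ℂˣ) : ℂ) • 1 := by
  rw [h.2 g hg, map_smul, LinearMap.toMatrix_id]

theorem matrix_scalar_comm_of_induces (ρ : IrrRep G) {ν : ↥(commutator G) →* ℂˣ} {ν' : G → ℂˣ}
    (h : Induces G ρ ν ν') {n : Type} [Fintype n] [DecidableEq n] (b : Module.Basis n ℂ ρ.carrier)
    (x : ↥(commutator G)) :
    LinearMap.toMatrix b b (ρ.ρ (x : G)) = ((ν x : ℂˣ) : ℂ) • 1 := by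
  rw [h.1 x, map_smul, LinearMap.toMatrix_id]

theorem char_vanish (ρ : IrrRep G) {ν : ↥(commutator G) →* ℂˣ} {ν' : G → ℂˣ}
    (h : Induces G ρ ν ν') {n : Type} [Fintype n] [DecidableEq n] (b : Module.Basis n ℂ ρ.carrier)
    {g : G} (hg : g ∉ centerPreimage G ν) :
    Matrix.trace (LinearMap.toMatrix b b (ρ.ρ g)) = 0 := by
  have hInv : NuInvariant G ν := scalar_invariant ρ ν h.1
  obtain ⟨x, hx⟩ := not_center hInv hg
  set M : G → Matrix n n ℂ := fun g => LinearMap.toMatrix b b (ρ.ρ g) with hM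
  have hMmul : ∀ g₁ g₂ : G, M (g₁ * g₂) = M g₁ * M g₂ := fun g₁ g₂ => by
    show LinearMap.toMatrix b b (ρ.ρ (g₁ * g₂)) = _
    rw [map_mul]; exact LinearMap.toMatrix_mul b (ρ.ρ g₁) (ρ.ρ g₂)
  have hMone : M 1 = 1 := by
    show LinearMap.toMatrix b b (ρ.ρ 1) = 1
    rw [map_one]; exact LinearMap.toMatrix_id b
  -- membership of the commutator element
  have hk : g * x * g⁻¹ * x⁻¹ ∈ commutator G := by
    rw [commutator_def]
    rw [show g * x * g⁻¹ * x⁻¹ = ⁅g, x⁆ from rfl]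
    exact Subgroup.commutator_mem_commutator (Subgroup.mem_top g) (Subgroup.mem_top x)
  have hki : (g * x * g⁻¹ * x⁻¹)⁻¹ ∈ commutator G := inv_mem hk
  have hval : ν ⟨(g * x * g⁻¹ * x⁻¹)⁻¹, hki⟩ = (ν ⟨g * x * g⁻¹ * x⁻¹, hk⟩)⁻¹ :=
    nu_inv hk hki
  have hne : (ν ⟨(g * x * g⁻¹ * x⁻¹)⁻¹, hki⟩ : ℂˣ) ≠ 1 := by
    rw [hval]
    simp only [ne_eq, inv_eq_one]
    exact hx hk
  -- conjugation invariance of trace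
  have h1 : x * g * x⁻¹ = (g * x * g⁻¹ * x⁻¹)⁻¹ * g := by group
  have htr1 : Matrix.trace (M (x * g * x⁻¹)) = Matrix.trace (M g) := by
    have e1 : M (x * g * x⁻¹) = M x * M g * M x⁻¹ := by
      rw [← hMmul, ← hMmul]
    have e2 : M x⁻¹ * (M x * M g) = M g := by
      rw [← mul_assoc, ← hMmul, inv_mul_cancel, hMone, one_mul]
    rw [e1, Matrix.trace_mul_comm, e2]
  have htr2 : Matrix.trace (M (x * g * x⁻¹))
      = ((ν ⟨(g * x * g⁻¹ * x⁻¹)⁻¹, hki⟩ : ℂˣ) : ℂ) * Matrix.trace (M g) := by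
    rw [h1, hMmul]
    have e3 : M ((g * x * g⁻¹ * x⁻¹)⁻¹) = ((ν ⟨(g * x * g⁻¹ * x⁻¹)⁻¹, hki⟩ : ℂˣ) : ℂ) • 1 :=
      matrix_scalar_comm_of_induces ρ h b ⟨_, hki⟩
    rw [e3, Matrix.smul_mul, one_mul, Matrix.trace_smul]
    rfl
  have h2 : (1 - ((ν ⟨(g * x * g⁻¹ * x⁻¹)⁻¹, hki⟩ : ℂˣ) : ℂ)) * Matrix.trace (M g) = 0 := by
    rw [sub_mul, one_mul, ← htr2, htr1, sub_self]
  rcases mul_eq_zero.mp h2 with h3 | h3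
  · exfalso
    apply hne
    have : ((ν ⟨(g * x * g⁻¹ * x⁻¹)⁻¹, hki⟩ : ℂˣ) : ℂ) = 1 := by linear_combination -h3
    exact Units.ext this
  · exact h3

end HeisAux
namespace HeisAux

variable {G}

theorem nuPrime_prod_inv (ρ : IrrRep G) {ν : ↥(commutator G) →* ℂˣ} {ν' : G → ℂˣ}
    (h : Induces G ρ ν ν') {g : G} (hg : g ∈ centerPreimage G ν)
    (hgi : g⁻¹ ∈ centerPreimage G ν) :
    ((ν' g : ℂˣ) : ℂ) * ((ν' g⁻¹ : ℂˣ) : ℂ) = 1 := by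
  have e1 : ρ.ρ (g * g⁻¹) = ((ν' g : ℂˣ) : ℂ) • LinearMap.id *
      (((ν' g⁻¹ : ℂˣ) : ℂ) • LinearMap.id) := by
    rw [map_mul, h.2 g hg, h.2 g⁻¹ hgi]
  rw [mul_inv_cancel, map_one, smul_id_mul] at e1
  have e2 : ((((ν' g : ℂˣ) : ℂ) * ((ν' g⁻¹ : ℂˣ) : ℂ)) • LinearMap.id :
      ρ.carrier →ₗ[ℂ] ρ.carrier) = (1 : ℂ) • LinearMap.id := by
    rw [← e1, one_smul]
    rfl
  exact scalar_unique ρ e2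

theorem repIso_of_same [Finite G] (ρ₁ ρ₂ : IrrRep G) (ν : ↥(commutator G) →* ℂˣ)
    (ν' : G → ℂˣ) (h₁ : Induces G ρ₁ ν ν') (h₂ : Induces G ρ₂ ν ν') : RepIso G ρ₁ ρ₂ := by
  classical
  cases nonempty_fintype G
  have hInv : NuInvariant G ν := scalar_invariant ρ₁ ν h₁.1
  have hnt1 : Nontrivial ρ₁.carrier := by obtain ⟨v, hv⟩ := ρ₁.nontrivial; exact ⟨v, 0, hv⟩
  have hnt2 : Nontrivial ρ₂.carrier := by obtain ⟨v, hv⟩ := ρ₂.nontrivial; exact ⟨v, 0, hv⟩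
  set d₁ := Module.finrank ℂ ρ₁.carrier with hd₁
  set d₂ := Module.finrank ℂ ρ₂.carrier with hd₂
  let b₁ : Module.Basis (Fin d₁) ℂ ρ₁.carrier := Module.finBasis ℂ ρ₁.carrier
  let b₂ : Module.Basis (Fin d₂) ℂ ρ₂.carrier := Module.finBasis ℂ ρ₂.carrier
  set M₁ : G → Matrix (Fin d₁) (Fin d₁) ℂ := fun g => LinearMap.toMatrix b₁ b₁ (ρ₁.ρ g) with hM₁
  set M₂ : G → Matrix (Fin d₂) (Fin d₂) ℂ := fun g => LinearMap.toMatrix b₂ b₂ (ρ₂.ρ g) with hM₂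
  have hM₁mul : ∀ g₁ g₂ : G, M₁ (g₁ * g₂) = M₁ g₁ * M₁ g₂ := fun g₁ g₂ => by
    show LinearMap.toMatrix b₁ b₁ (ρ₁.ρ (g₁ * g₂)) = _
    rw [map_mul]; exact LinearMap.toMatrix_mul b₁ (ρ₁.ρ g₁) (ρ₁.ρ g₂)
  have hM₂mul : ∀ g₁ g₂ : G, M₂ (g₁ * g₂) = M₂ g₁ * M₂ g₂ := fun g₁ g₂ => by
    show LinearMap.toMatrix b₂ b₂ (ρ₂.ρ (g₁ * g₂)) = _
    rw [map_mul]; exact LinearMap.toMatrix_mul b₂ (ρ₂.ρ g₁) (ρ₂.ρ g₂)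
  -- the sum of products of characters
  have hprod : ∀ g : G, Matrix.trace (M₂ g) * Matrix.trace (M₁ g⁻¹)
      = if g ∈ centerPreimage G ν then ((d₁ * d₂ : ℕ) : ℂ) else 0 := by
    intro g
    by_cases hgC : g ∈ centerPreimage G ν
    · rw [if_pos hgC]
      have hgiC : g⁻¹ ∈ centerPreimage G ν := center_inv hInv hgC
      have e2 : M₂ g = ((ν' g : ℂˣ) : ℂ) • 1 := matrix_scalar_of_induces ρ₂ h₂ b₂ hgC
      have e1 : M₁ g⁻¹ = ((ν' g⁻¹ : ℂˣ) : ℂ) • 1 := matrix_scalar_of_induces ρ₁ h₁ b₁ hgiC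
      rw [e1, e2, Matrix.trace_smul, Matrix.trace_smul, Matrix.trace_one, Matrix.trace_one]
      have hval := nuPrime_prod_inv ρ₁ h₁ hgC hgiC
      simp only [smul_eq_mul, Fintype.card_fin]
      push_cast
      linear_combination (d₁ : ℂ) * (d₂ : ℂ) * hval
    · rw [if_neg hgC, char_vanish ρ₂ h₂ b₂ hgC, zero_mul]
  have hSval : ∑ g : G, Matrix.trace (M₂ g) * Matrix.trace (M₁ g⁻¹)
      = ((Finset.univ.filter (fun g : G => g ∈ centerPreimage G ν)).card : ℂ)
        * ((d₁ * d₂ : ℕ) : ℂ) := by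
    rw [Finset.sum_congr rfl (fun g _ => hprod g), ← Finset.sum_filter,
      Finset.sum_const, nsmul_eq_mul]
  have hd₁pos : 0 < d₁ := Module.finrank_pos
  have hd₂pos : 0 < d₂ := Module.finrank_pos
  have hcardpos : 0 < (Finset.univ.filter (fun g : G => g ∈ centerPreimage G ν)).card :=
    Finset.card_pos.mpr ⟨1, by simp [center_one hInv]⟩
  have hSne : ∑ g : G, Matrix.trace (M₂ g) * Matrix.trace (M₁ g⁻¹) ≠ 0 := by
    rw [hSval]
    exact mul_ne_zero (Nat.cast_ne_zero.mpr hcardpos.ne')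
      (Nat.cast_ne_zero.mpr (Nat.mul_pos hd₁pos hd₂pos).ne')
  -- existence of a nonzero averaged intertwiner
  have hA : ∃ A : Matrix (Fin d₂) (Fin d₁) ℂ, (∑ g : G, M₂ g * A * M₁ g⁻¹) ≠ 0 := by
    by_contra hc
    push_neg at hc
    apply hSne
    have hentry : ∀ (i : Fin d₂) (j : Fin d₁),
        (∑ g : G, (M₂ g) i i * (M₁ g⁻¹) j j) = 0 := by
      intro i j
      have h0 := hc (Matrix.single i j (1:ℂ))
      have h1 : (∑ g : G, M₂ g * Matrix.single i j (1:ℂ) * M₁ g⁻¹) i j = 0 := by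
        rw [h0]; rfl
      rw [Matrix.sum_apply] at h1
      rw [← h1]
      apply Finset.sum_congr rfl
      intro g _
      simp [Matrix.mul_apply, Matrix.single, ite_and, Finset.mul_sum, Finset.sum_mul,
        mul_ite, ite_mul, zero_mul, mul_zero, Finset.sum_ite_eq, Finset.sum_ite_eq']
    calc ∑ g : G, Matrix.trace (M₂ g) * Matrix.trace (M₁ g⁻¹)
        = ∑ g : G, ∑ i : Fin d₂, ∑ j : Fin d₁, (M₂ g) i i * (M₁ g⁻¹) j j := by
          apply Finset.sum_congr rfl
          intro g _
          rw [show Matrix.trace (M₂ g) = ∑ i : Fin d₂, (M₂ g) i i from rfl,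
            show Matrix.trace (M₁ g⁻¹) = ∑ j : Fin d₁, (M₁ g⁻¹) j j from rfl,
            Finset.sum_mul_sum]
      _ = ∑ i : Fin d₂, ∑ j : Fin d₁, ∑ g : G, (M₂ g) i i * (M₁ g⁻¹) j j := by
          rw [Finset.sum_comm]
          apply Finset.sum_congr rfl
          intro i _
          rw [Finset.sum_comm]
      _ = 0 := by simp [hentry]
  obtain ⟨A, hA⟩ := hA
  set N := ∑ g : G, M₂ g * A * M₁ g⁻¹ with hN
  have hNM : ∀ h : G, N * M₁ h = M₂ h * N := by
    intro h
    rw [hN, Matrix.sum_mul, Matrix.mul_sum]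
    apply Fintype.sum_equiv (Equiv.mulLeft h⁻¹)
    intro x
    have l1 : M₂ x * A * M₁ x⁻¹ * M₁ h = M₂ x * A * M₁ (x⁻¹ * h) := by
      rw [Matrix.mul_assoc (M₂ x * A), ← hM₁mul]
    have l2 : M₂ h * (M₂ (h⁻¹ * x) * A * M₁ ((h⁻¹ * x)⁻¹)) = M₂ x * A * M₁ (x⁻¹ * h) := by
      rw [show (h⁻¹ * x)⁻¹ = x⁻¹ * h by group, ← Matrix.mul_assoc, ← Matrix.mul_assoc,
        ← hM₂mul, mul_inv_cancel_left]
    rw [l1]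
    rw [show (Equiv.mulLeft h⁻¹) x = h⁻¹ * x from rfl, l2]
  set T : ρ₁.carrier →ₗ[ℂ] ρ₂.carrier := Matrix.toLin b₁ b₂ N with hT
  have hT0 : T ≠ 0 := by
    intro h0
    apply hA
    have := (Matrix.toLin b₁ b₂).map_eq_zero_iff.mp (hT ▸ h0)
    exact this
  have hpoint : ∀ (h : G) (v : ρ₁.carrier), T (ρ₁.ρ h v) = ρ₂.ρ h (T v) := by
    intro h v
    have e1 : ρ₁.ρ h = Matrix.toLin b₁ b₁ (M₁ h) := (Matrix.toLin_toMatrix b₁ b₁ (ρ₁.ρ h)).symm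
    have e2 : ρ₂.ρ h = Matrix.toLin b₂ b₂ (M₂ h) := (Matrix.toLin_toMatrix b₂ b₂ (ρ₂.ρ h)).symm
    have hcomp : T ∘ₗ ρ₁.ρ h = ρ₂.ρ h ∘ₗ T := by
      calc T ∘ₗ ρ₁.ρ h = Matrix.toLin b₁ b₂ (N * M₁ h) := by
            rw [e1, hT, Matrix.toLin_mul b₁ b₁ b₂]
        _ = Matrix.toLin b₁ b₂ (M₂ h * N) := by rw [hNM]
        _ = ρ₂.ρ h ∘ₗ T := by rw [Matrix.toLin_mul b₁ b₂ b₂, e2, hT]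
    have := LinearMap.congr_fun hcomp v
    simpa using this
  have hker : LinearMap.ker T = ⊥ := by
    rcases ρ₁.irreducible (LinearMap.ker T) (fun g v hv => by
      rw [LinearMap.mem_ker] at hv ⊢
      rw [hpoint g v, hv, map_zero]) with hk | hk
    · exact hk
    · exact absurd (LinearMap.ker_eq_top.mp hk) hT0
  have hrange : LinearMap.range T = ⊤ := by
    rcases ρ₂.irreducible (LinearMap.range T) (fun g w hw => by
      obtain ⟨v, rfl⟩ := hw
      exact ⟨ρ₁.ρ g v, hpoint g v⟩) with hr | hr
    · exfalso
      exact hT0 (LinearMap.range_eq_bot.mp hr)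
    · exact hr
  refine ⟨LinearEquiv.ofBijective T ⟨LinearMap.ker_eq_bot.mp hker,
    LinearMap.range_eq_top.mp hrange⟩, ?_⟩
  intro g v
  exact hpoint g v

end HeisAux
namespace HeisAux

variable {G}

theorem scalar_transport (ρ₁ ρ₂ : IrrRep G) (e : ρ₁.carrier ≃ₗ[ℂ] ρ₂.carrier)
    (he : ∀ (g : G) (v : ρ₁.carrier), e (ρ₁.ρ g v) = ρ₂.ρ g (e v)) {g : G} {c : ℂ}
    (h : ρ₁.ρ g = c • LinearMap.id) : ρ₂.ρ g = c • LinearMap.id := by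
  apply LinearMap.ext
  intro w
  have h1 : ρ₂.ρ g (e (e.symm w)) = e (ρ₁.ρ g (e.symm w)) := (he g _).symm
  rw [e.apply_symm_apply] at h1
  rw [h1, h]
  simp

end HeisAux

/-- Classification of Heisenberg representations of a finite group `Γ`:
(a) a Heisenberg representation acts on `⁅Γ,Γ⁆` by a unique scalar character `ν`, which
is invariant under conjugation; (b) it acts by a unique scalar character `ν̃` on the
preimage `C_ρ` of the center of `Γ/ker ν`, and `ν̃` is a homomorphism there extending
`ν`; (c) the assignment `ρ ↦ (ν, ν̃)` induces a bijection from isomorphism classes of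
Heisenberg representations onto the set `S(Γ)` of pairs `(ν, ν̃)` of this shape. -/
theorem heisenberg_classification [Finite G] :
    (∀ ρ : IrrRep G, IsHeisenbergRep G ρ →
      (∃! ν : ↥(commutator G) →* ℂˣ,
        ∀ x : ↥(commutator G), ρ.ρ (x : G) = ((ν x : ℂˣ) : ℂ) • LinearMap.id) ∧
      (∀ ν : ↥(commutator G) →* ℂˣ,
        (∀ x : ↥(commutator G), ρ.ρ (x : G) = ((ν x : ℂˣ) : ℂ) • LinearMap.id) →
        NuInvariant G ν) ∧
      (∀ ν : ↥(commutator G) →* ℂˣ,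
        (∀ x : ↥(commutator G), ρ.ρ (x : G) = ((ν x : ℂˣ) : ℂ) • LinearMap.id) →
        ∃ ν' : G → ℂˣ,
          (∀ g ∈ centerPreimage G ν, ρ.ρ g = ((ν' g : ℂˣ) : ℂ) • LinearMap.id) ∧
          IsCentralExtensionOf G ν ν' ∧
          ∀ ν'' : G → ℂˣ,
            (∀ g ∈ centerPreimage G ν, ρ.ρ g = ((ν'' g : ℂˣ) : ℂ) • LinearMap.id) →
            ∀ g ∈ centerPreimage G ν, ν'' g = ν' g)) ∧
    (∀ (ν : ↥(commutator G) →* ℂˣ) (ν' : G → ℂˣ),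
      NuInvariant G ν → IsCentralExtensionOf G ν ν' →
      ∃ ρ : IrrRep G, IsHeisenbergRep G ρ ∧ Induces G ρ ν ν') ∧
    (∀ ρ₁ ρ₂ : IrrRep G, IsHeisenbergRep G ρ₁ → IsHeisenbergRep G ρ₂ →
      (RepIso G ρ₁ ρ₂ ↔
        ∃ (ν : ↥(commutator G) →* ℂˣ) (ν' : G → ℂˣ),
          Induces G ρ₁ ν ν' ∧ Induces G ρ₂ ν ν')) := by
  refine ⟨?_, ?_, ?_⟩
  · intro ρ hH
    refine ⟨⟨HeisAux.nuOf ρ hH, HeisAux.nuOf_spec ρ hH, ?_⟩, ?_, ?_⟩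
    · intro ν hν
      apply MonoidHom.ext
      intro x
      exact HeisAux.scalar_eq ρ (hν x) (HeisAux.nuOf_spec ρ hH x)
    · intro ν hν
      exact HeisAux.scalar_invariant ρ ν hν
    · intro ν hν
      refine ⟨HeisAux.nuTilde ρ ν hν, fun g hg => HeisAux.nuTilde_spec ρ ν hν hg,
        HeisAux.nuTilde_central ρ ν hν, ?_⟩
      intro ν'' hν'' g hg
      exact HeisAux.scalar_eq ρ (hν'' g hg) (HeisAux.nuTilde_spec ρ ν hν hg)
  · intro ν ν' hInv hCE
    exact HeisAux.exists_heis ν ν' hInv hCE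
  · intro ρ₁ ρ₂ hH₁ hH₂
    constructor
    · rintro ⟨e, he⟩
      set ν := HeisAux.nuOf ρ₁ hH₁ with hνdef
      have hν₁ := HeisAux.nuOf_spec ρ₁ hH₁
      have hν'₁ : ∀ g ∈ centerPreimage G ν,
          ρ₁.ρ g = ((HeisAux.nuTilde ρ₁ ν hν₁ g : ℂˣ) : ℂ) • LinearMap.id :=
        fun g hg => HeisAux.nuTilde_spec ρ₁ ν hν₁ hg
      refine ⟨ν, HeisAux.nuTilde ρ₁ ν hν₁, ⟨hν₁, hν'₁⟩, ⟨?_, ?_⟩⟩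
      · intro x
        exact HeisAux.scalar_transport ρ₁ ρ₂ e he (hν₁ x)
      · intro g hg
        exact HeisAux.scalar_transport ρ₁ ρ₂ e he (hν'₁ g hg)
    · rintro ⟨ν, ν', h₁, h₂⟩
      exact HeisAux.repIso_of_same ρ₁ ρ₂ ν ν' h₁ h₂
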